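/- There is no 3-wise trailing-zero independent hash family over n-grams (n ≥ 2) that is recursive. That is, if H is a family of hash functions h mapping n-grams over an alphabet Σ (|Σ| ≥ 2) to L-bit values such that there exists a function F with h(x₂,…,x_{n+1}) = F(h(x₁,…,x_n), x₁, x_{n+1}) for all symbols, then H cannot satisfy 3-wise trailing-zero independence. -/

import Mathlib

/-- Uniform probability of an event over a finite sample space. -/
noncomputable def prob (Ω : Type*) (p : Ω → Prop) : ℚ :=
  (Nat.card {ω : Ω // p ω} : ℚ) / (Nat.card Ω : ℚ)

lemma prob_congr (Ω : Type*) (p q : Ω → Prop) (h : ∀ ω, p ω ↔ q ω) :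
    prob Ω p = prob Ω q := by
  unfold prob
  congr 2
  exact Nat.card_congr (Equiv.subtypeEquivRight h)

lemma prob_false (Ω : Type*) (p : Ω → Prop) (h : ∀ ω, ¬ p ω) :
    prob Ω p = 0 := by
  unfold prob
  have : IsEmpty {ω : Ω // p ω} := ⟨fun ⟨ω, hω⟩ => h ω hω⟩
  rw [Nat.card_of_isEmpty]
  simp

/-- There is no 3-wise trailing-zero independent recursive hash family over n-grams. -/
theorem no_recursive_threewise_trailing_zero_independent
    {σ : Type*} [Fintype σ] (n L : ℕ) (hn : 2 ≤ n) (hσ : 2 ≤ Fintype.card σ)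
    (hL : 1 ≤ L) (Ω : Type*) [Fintype Ω] [Nonempty Ω]
    (H : Ω → (Fin n → σ) → Fin (2 ^ L))
    (F : Fin (2 ^ L) → σ → σ → Fin (2 ^ L))
    (hrec : ∀ (ω : Ω) (x : Fin (n + 1) → σ),
      H ω (fun i => x i.succ) = F (H ω (fun i => x i.castSucc)) (x 0) (x (Fin.last n)))
    (hTZ : ∀ g : Fin 3 → (Fin n → σ), Function.Injective g →
      ∀ j : Fin 3 → ℕ, (∀ i, j i ≤ L) →
        prob Ω (fun ω => ∀ i, 2 ^ (j i) ∣ (H ω (g i)).val)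
          = 1 / 2 ^ (j 0 + j 1 + j 2)) :
    False := by
  obtain ⟨a, b, hab⟩ := Fintype.exists_pair_of_one_lt_card (α := σ) (by omega)
  -- the three n-grams
  set g1 : Fin n → σ := fun _ => a with hg1
  set g2 : Fin n → σ := fun i => if i.val = n - 1 then b else a with hg2
  set g3 : Fin n → σ := fun _ => b with hg3
  have hn0 : 0 < n := by omega
  -- recursion: H ω g2 = F (H ω g1) a b
  have hkey : ∀ ω, H ω g2 = F (H ω g1) a b := by
    intro ω
    have := hrec ω (fun i => if i.val = n then b else a)
    have e1 : (fun i : Fin n => if (Fin.castSucc i).val = n then b else a) = g1 := by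
      funext i
      have : i.val ≠ n := by omega
      simp [Fin.coe_castSucc, this, hg1]
    have e2 : (fun i : Fin n => if (Fin.succ i).val = n then b else a) = g2 := by
      funext i
      have : (Fin.succ i).val = i.val + 1 := rfl
      rw [this, hg2]
      have hiff : i.val + 1 = n ↔ i.val = n - 1 := by omega
      simp only [hiff]
    have e3 : (if (0 : Fin (n+1)).val = n then b else a) = a := by
      have : (0 : Fin (n+1)).val = 0 := rfl
      rw [this]; simp; omega
    have e4 : (if (Fin.last n).val = n then b else a) = b := by simp
    rw [e1, e2, e3, e4] at this
    exact this
  -- injectivity of ![g1, g2, g3]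
  have hd12 : g1 ≠ g2 := by
    intro h
    have := congrFun h ⟨n - 1, by omega⟩
    simp [hg1, hg2] at this
    exact hab this
  have hd13 : g1 ≠ g3 := by
    intro h
    have := congrFun h ⟨0, hn0⟩
    exact hab this
  have hd23 : g2 ≠ g3 := by
    intro h
    have := congrFun h ⟨0, hn0⟩
    have h0 : (0 : ℕ) ≠ n - 1 := by omega
    simp [hg2, hg3, h0] at this
    exact hab this
  have hinj : Function.Injective ![g1, g2, g3] := by
    intro i k h
    fin_cases i <;> fin_cases k <;>
      simp_all [Matrix.cons_val_zero, Matrix.cons_val_one] <;>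
      first
        | rfl
        | exact absurd h hd12 | exact absurd h.symm hd12
        | exact absurd h hd13 | exact absurd h.symm hd13
        | exact absurd h hd23 | exact absurd h.symm hd23
  -- dvd by 2^L means zero
  have hzero : ∀ (v : Fin (2 ^ L)), 2 ^ L ∣ v.val ↔ v = 0 := by
    intro v
    constructor
    · intro h
      have := Nat.eq_zero_of_dvd_of_lt h v.isLt
      exact Fin.ext this
    · intro h; rw [h]; simp
  -- probabilities from hTZ
  have hP2 := hTZ ![g1, g2, g3] hinj ![L, L, 0] (by
    intro i; fin_cases i <;> simp)
  have hP1 := hTZ ![g1, g2, g3] hinj ![L, 0, 0] (by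
    intro i; fin_cases i <;> simp)
  have hsum2 : (![L, L, 0] : Fin 3 → ℕ) 0 + ![L, L, 0] 1 + ![L, L, 0] 2 = 2 * L := by
    simp; ring
  have hsum1 : (![L, 0, 0] : Fin 3 → ℕ) 0 + ![L, 0, 0] 1 + ![L, 0, 0] 2 = L := by
    simp
  rw [hsum2] at hP2
  rw [hsum1] at hP1
  -- simplify the events
  have hE2 : prob Ω (fun ω => ∀ i, 2 ^ ((![L, L, 0] : Fin 3 → ℕ) i) ∣ (H ω (![g1, g2, g3] i)).val)
      = prob Ω (fun ω => H ω g1 = 0 ∧ H ω g2 = 0) := by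
    apply prob_congr
    intro ω
    constructor
    · intro h
      refine ⟨(hzero _).mp ?_, (hzero _).mp ?_⟩
      · have := h 0; simpa using this
      · have := h 1; simpa using this
    · intro ⟨h1, h2⟩ i
      fin_cases i <;> simp [h1, h2]
  have hE1 : prob Ω (fun ω => ∀ i, 2 ^ ((![L, 0, 0] : Fin 3 → ℕ) i) ∣ (H ω (![g1, g2, g3] i)).val)
      = prob Ω (fun ω => H ω g1 = 0) := by
    apply prob_congr
    intro ω
    constructor
    · intro h
      have := h 0; simpa [hzero] using this
    · intro h1 i
      fin_cases i <;> simp [h1]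
  rw [hE2] at hP2
  rw [hE1] at hP1
  by_cases hF : F 0 a b = 0
  · -- event2 = event1
    have : prob Ω (fun ω => H ω g1 = 0 ∧ H ω g2 = 0) = prob Ω (fun ω => H ω g1 = 0) := by
      apply prob_congr
      intro ω
      constructor
      · exact fun h => h.1
      · intro h1
        refine ⟨h1, ?_⟩
        rw [hkey ω, h1, hF]
    rw [this, hP1] at hP2
    field_simp at hP2
    have := pow_right_injective₀ (by norm_num : (0:ℚ) < 2) (by norm_num) hP2
    omega
  · -- event2 is empty
    have : prob Ω (fun ω => H ω g1 = 0 ∧ H ω g2 = 0) = 0 := by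
      apply prob_false
      intro ω ⟨h1, h2⟩
      rw [hkey ω, h1] at h2
      exact hF h2
    rw [this] at hP2
    have h2pos : (0:ℚ) < 1 / 2 ^ (2 * L) := by positivity
    rw [← hP2] at h2pos
    exact lt_irrefl 0 h2pos
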